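/- Let H : 𝔥₁ ⊆ 𝔉 → 𝔉 be self-adjoint and bounded from below, let A ∈ 𝔅(𝔥₁,𝔉) satisfy assumption (H3), and suppose λ∘ ∈ Z_S. Then the family of bounded operators R̂_z := R_z + 𝔾_z (Θ_S + M_z)^{-1} 𝔾_{z̄}*, for z ∈ Z_S, is the resolvent of a (densely defined) self-adjoint operator in 𝔉. -/

import Mathlib

open scoped InnerProductSpace ComplexConjugate

noncomputable section

local notation "⟪" x ", " y "⟫" => @inner ℂ _ _ x y

/-- Abstract context for the paper "On the resolvent of H+A*+A":
`F` is the Hilbert space `𝔉`, `H1` is the space `𝔥₁ = dom(H)` endowed with the graph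
norm, `Hm1` is the dual space `𝔥₋₁`.  `j1 : 𝔥₁ ↪ 𝔉` and `jm : 𝔉 ↪ 𝔥₋₁` are the dense
inclusions, `Hop` is `H` viewed as a bounded operator `𝔥₁ → 𝔉`, `Hbar` is its closure
`H̄ : 𝔉 → 𝔥₋₁`, `lamInf = inf σ(H)`, `res = ρ(H)`, `RF z = (-H+z)⁻¹ : 𝔉 → 𝔥₁`,
`RM z` is its extension `𝔥₋₁ → 𝔉`, `pair` is the duality pairing between `𝔥₋₁` and `𝔥₁`
(conjugate-linear in the first variable) extending the scalar product of `𝔉`,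
`ns s` is the scale norm `‖ψ‖_s = ‖(H²+1)^{s/2}ψ‖` on `𝔥₁` (`0 ≤ s ≤ 1`),
`A ∈ 𝔅(𝔥₁,𝔉)` and `Astar : 𝔉 → 𝔥₋₁` is its dual-pairing adjoint. -/
structure Ctx (F H1 Hm1 : Type*)
    [NormedAddCommGroup F] [InnerProductSpace ℂ F] [CompleteSpace F]
    [NormedAddCommGroup H1] [InnerProductSpace ℂ H1] [CompleteSpace H1]
    [NormedAddCommGroup Hm1] [InnerProductSpace ℂ Hm1] [CompleteSpace Hm1] where
  j1 : H1 →L[ℂ] F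
  jm : F →L[ℂ] Hm1
  Hop : H1 →L[ℂ] F
  Hbar : F →L[ℂ] Hm1
  lamInf : ℝ
  res : Set ℂ
  RF : ℂ → (F →L[ℂ] H1)
  RM : ℂ → (Hm1 →L[ℂ] F)
  pair : Hm1 → H1 → ℂ
  ns : ℝ → H1 → ℝ
  A : H1 →L[ℂ] F
  Astar : F →L[ℂ] Hm1
  j1_inj : Function.Injective j1
  j1_dense : DenseRange j1
  jm_inj : Function.Injective jm
  jm_dense : DenseRange jm
  /-- the norm of `𝔥₁` is the graph norm of `H` -/
  norm1_sq : ∀ ψ : H1, ‖ψ‖ ^ 2 = ‖j1 ψ‖ ^ 2 + ‖Hop ψ‖ ^ 2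
  /-- `H` is symmetric -/
  Hsymm : ∀ ψ φ : H1, ⟪j1 ψ, Hop φ⟫ = ⟪Hop ψ, j1 φ⟫
  /-- `H` is self-adjoint: non-real points belong to `ρ(H)` -/
  res_nonreal : ∀ z : ℂ, z.im ≠ 0 → z ∈ res
  /-- `H` is bounded from below by `lamInf` -/
  res_below : ∀ x : ℝ, x < lamInf → (x : ℂ) ∈ res
  /-- `lamInf` is exactly `inf σ(H)` -/
  lamInf_not_res : (lamInf : ℂ) ∉ res
  RF_inv_left : ∀ z ∈ res, (RF z).comp (z • j1 - Hop) = ContinuousLinearMap.id ℂ H1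
  RF_inv_right : ∀ z ∈ res, (z • j1 - Hop).comp (RF z) = ContinuousLinearMap.id ℂ F
  /-- `H̄` extends `H` -/
  Hbar_ext : Hbar.comp j1 = jm.comp Hop
  /-- `RM z` extends `RF z` -/
  RM_ext : ∀ z ∈ res, (RM z).comp jm = j1.comp (RF z)
  RM_inv_left : ∀ z ∈ res, (RM z).comp (z • jm - Hbar) = ContinuousLinearMap.id ℂ F
  RM_inv_right : ∀ z ∈ res, (z • jm - Hbar).comp (RM z) = ContinuousLinearMap.id ℂ Hm1
  pair_add : ∀ x y φ, pair (x + y) φ = pair x φ + pair y φ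
  pair_smul : ∀ (a : ℂ) x φ, pair (a • x) φ = starRingEnd ℂ a * pair x φ
  pair_addr : ∀ x φ₁ φ₂, pair x (φ₁ + φ₂) = pair x φ₁ + pair x φ₂
  pair_smulr : ∀ (a : ℂ) x φ, pair x (a • φ) = a * pair x φ
  pair_cont : ∀ φ, Continuous fun x => pair x φ
  /-- the pairing extends the scalar product of `𝔉` -/
  pair_jm : ∀ (ψ : F) (φ : H1), pair (jm ψ) φ = ⟪ψ, j1 φ⟫
  pair_nondeg : ∀ x, (∀ φ, pair x φ = 0) → x = 0
  ns_zero : ∀ ψ, ns 0 ψ = ‖j1 ψ‖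
  ns_one : ∀ ψ, ns 1 ψ = ‖ψ‖
  ns_nonneg : ∀ s ψ, 0 ≤ ns s ψ
  ns_mono : ∀ s t : ℝ, 0 ≤ s → s ≤ t → t ≤ 1 → ∀ ψ, ns s ψ ≤ ns t ψ
  /-- interpolation property of the scale of Hilbert spaces -/
  ns_interp : ∀ s : ℝ, 0 ≤ s → s ≤ 1 → ∀ ψ, ns s ψ ≤ ‖ψ‖ ^ s * ‖j1 ψ‖ ^ (1 - s)
  /-- `Astar` is the dual-pairing adjoint of `A` -/
  Astar_spec : ∀ (ψ : F) (φ : H1), pair (Astar ψ) φ = ⟪ψ, A φ⟫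

variable {F H1 Hm1 : Type*}
  [NormedAddCommGroup F] [InnerProductSpace ℂ F] [CompleteSpace F]
  [NormedAddCommGroup H1] [InnerProductSpace ℂ H1] [CompleteSpace H1]
  [NormedAddCommGroup Hm1] [InnerProductSpace ℂ Hm1] [CompleteSpace Hm1]

namespace Ctx

variable (c : Ctx F H1 Hm1)

/-- `G_z := (A R_{z̄})* ∈ 𝔅(𝔉)`. -/
def G (z : ℂ) : F →L[ℂ] F :=
  ContinuousLinearMap.adjoint (c.A.comp (c.RF (starRingEnd ℂ z)))

/-- `G_z* ∈ 𝔅(𝔉)`, for `z` real this is `G*`. -/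
def Gst (lam : ℝ) : F →L[ℂ] F :=
  ContinuousLinearMap.adjoint (c.G (lam : ℂ))

/-- `𝔸 : 𝔥₁ → 𝔉⊕𝔥₁`, `𝔸ψ = Aψ ⊕ ψ`. -/
def Ab : H1 →L[ℂ] (F × H1) :=
  c.A.prod (ContinuousLinearMap.id ℂ H1)

/-- `𝔾_z : 𝔉⊕𝔥₋₁ → 𝔉`, `𝔾_z(ψ⊕φ) = G_zψ + R_zφ`. -/
def Gb (z : ℂ) : (F × Hm1) →L[ℂ] F :=
  (c.G z).comp (ContinuousLinearMap.fst ℂ F Hm1) +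
    (c.RM z).comp (ContinuousLinearMap.snd ℂ F Hm1)

/-- `𝔾_{z̄}* : 𝔉 → 𝔉⊕𝔥₁`, `ψ ↦ (A R_z ψ) ⊕ (R_z ψ)`. -/
def Gbstar (z : ℂ) : F →L[ℂ] (F × H1) :=
  (c.A.comp (c.RF z)).prod (c.RF z)

/-- `M_z = 𝔸(𝔾 - 𝔾_z) = (z-λ∘) 𝔾* 𝔾_z : 𝔉⊕𝔥₋₁ → 𝔉⊕𝔥₁`. -/
def M (lam : ℝ) (z : ℂ) : (F × Hm1) →L[ℂ] (F × H1) :=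
  (z - (lam : ℂ)) • ((c.Gbstar (lam : ℂ)).comp (c.Gb z))

/-- `M' : 𝔉⊕𝔥₋₁ → 𝔉⊕𝔥₁` is a realization of `M_z := 𝔸(𝔾 - 𝔾_z)`, i.e. the second
component of `M' x` is the lift to `𝔥₁` of `(𝔾 - 𝔾_z)x` and the first component is `A`
applied to it. -/
def IsMLift (lam : ℝ) (z : ℂ) (M' : (F × Hm1) →L[ℂ] (F × H1)) : Prop :=
  ∀ x : F × Hm1,
    c.j1 ((M' x).2) = c.Gb (lam : ℂ) x - c.Gb z x ∧ (M' x).1 = c.A ((M' x).2)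

/-- The domain `𝔇 = {ψ ∈ 𝔉 : ψ - Gψ ∈ 𝔥₁}` (with `G = G_{λ∘}`). -/
def Dom (lam : ℝ) : Set F :=
  {ψ | ∃ φ : H1, ψ - c.G (lam : ℂ) ψ = c.j1 φ}

/-- The action of the block operator matrix `Θ_S = [[T_S, 1-G*],[1-G, -R]]` on the element
`ψ ⊕ φ` of its domain `𝔇⊕𝔉`; here `ψ0 ∈ 𝔥₁` is the lift of `(1-G)ψ`, so that
`T_Sψ = (1-G*)S(1-G)ψ = (1-G*)(Sψ0)`. -/
def ThetaS (lam : ℝ) (S : H1 →ₗ[ℂ] F) (ψ : F) (ψ0 : H1) (φ : F) : F × H1 :=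
  (S ψ0 - c.Gst lam (S ψ0) + φ - c.Gst lam φ, ψ0 - c.RF (lam : ℂ) φ)

/-- The action of `Θ_S + M_z` on `ψ ⊕ φ ∈ 𝔇⊕𝔉`. -/
def ThetaMS (lam : ℝ) (S : H1 →ₗ[ℂ] F) (z : ℂ) (ψ : F) (ψ0 : H1) (φ : F) : F × H1 :=
  c.ThetaS lam S ψ ψ0 φ + c.M lam z (ψ, c.jm φ)

/-- `Λ ∈ 𝔅(𝔉⊕𝔥₁, 𝔉⊕𝔥₋₁)` is the (two-sided) inverse of `Θ_S + M_z`. -/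
def IsInvTheta (lam : ℝ) (S : H1 →ₗ[ℂ] F) (z : ℂ)
    (Λ : (F × H1) →L[ℂ] (F × Hm1)) : Prop :=
  (∀ (ψ : F) (ψ0 : H1) (φ : F), c.j1 ψ0 = ψ - c.G (lam : ℂ) ψ →
    Λ (c.ThetaMS lam S z ψ ψ0 φ) = (ψ, c.jm φ)) ∧
  (∀ y : F × H1, ∃ (ψ : F) (ψ0 : H1) (φ : F),
    c.j1 ψ0 = ψ - c.G (lam : ℂ) ψ ∧ Λ y = (ψ, c.jm φ) ∧ c.ThetaMS lam S z ψ ψ0 φ = y)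

/-- `Z_S := {z ∈ ρ(H) : (Θ_S + M_z)⁻¹ ∈ 𝔅(𝔉⊕𝔥₁, 𝔉⊕𝔥₋₁)}`. -/
def ZS (lam : ℝ) (S : H1 →ₗ[ℂ] F) : Set ℂ :=
  {z | z ∈ c.res ∧ ∃ Λ : (F × H1) →L[ℂ] (F × Hm1), c.IsInvTheta lam S z Λ}

/-- `R̂_z = R_z + 𝔾_z Λ 𝔾_{z̄}* : 𝔉 → 𝔉`. -/
def Rhat (z : ℂ) (Λ : (F × H1) →L[ℂ] (F × Hm1)) : F →L[ℂ] F :=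
  c.j1.comp (c.RF z) + (c.Gb z).comp (Λ.comp (c.Gbstar z))

/-- The duality pairing `⟨⟨·,·⟩⟩_{-1,1}` between `𝔉⊕𝔥₋₁` and `𝔉⊕𝔥₁`. -/
def pairX (x : F × Hm1) (y : F × H1) : ℂ :=
  ⟪x.1, y.1⟫ + c.pair x.2 y.2

/-- Assumption (H3): `ran(G_z) ∩ 𝔥₁ = {0}` for all `z ∈ ρ(H)`. -/
def H3 : Prop :=
  ∀ z ∈ c.res, ∀ (ψ : F) (φ : H1), c.G z ψ = c.j1 φ → c.G z ψ = 0

/-- `S` is a symmetric operator (with domain containing `𝔥₁`). -/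
def IsSymmOp (S : H1 →ₗ[ℂ] F) : Prop :=
  ∀ ψ φ : H1, ⟪S ψ, c.j1 φ⟫ = ⟪c.j1 ψ, S φ⟫

/-- `S` is `H`-small with constants `a`, `b`. -/
def HSmall (S : H1 →ₗ[ℂ] F) (a b : ℝ) : Prop :=
  ∀ ψ : H1, ‖S ψ‖ ≤ a * ‖c.Hop ψ‖ + b * ‖c.j1 ψ‖

/-- `HSf ψ ψ0` realizes the action of `H_S = H̄ + A* + A_S` on `ψ ∈ 𝔇` (with `ψ0` the lift
of `(1-G)ψ`): `H_Sψ ∈ 𝔉` is characterized by `H_Sψ = H̄ψ + A*ψ + Aψ0 - T_Sψ` in `𝔥₋₁`. -/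
def IsHSAction (lam : ℝ) (S : H1 →ₗ[ℂ] F) (HSf : F → H1 → F) : Prop :=
  ∀ (ψ : F) (ψ0 : H1), c.j1 ψ0 = ψ - c.G (lam : ℂ) ψ →
    c.jm (HSf ψ ψ0) =
      c.Hbar ψ + c.Astar ψ + c.jm (c.A ψ0 - (S ψ0 - c.Gst lam (S ψ0)))

/-- `Rop = (-(H+W)+z)⁻¹`, the resolvent at `z` of the perturbation of `H` by the
`H`-bounded operator `W` (with domain `𝔥₁`). -/
def IsResolventOf (W : H1 →L[ℂ] F) (z : ℂ) (Rop : F →L[ℂ] F) : Prop :=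
  (∀ ψ : H1, Rop (z • c.j1 ψ - (c.Hop ψ + W ψ)) = c.j1 ψ) ∧
  (∀ χ : F, ∃ ψ : H1, Rop χ = c.j1 ψ ∧ z • c.j1 ψ - (c.Hop ψ + W ψ) = χ)

/-- `Rop = (-H_S+z)⁻¹`, the resolvent at `z` of the operator `H_S` with domain `𝔇` whose
action is realized by `HSf`. -/
def IsResolventOfD (lam : ℝ) (HSf : F → H1 → F) (z : ℂ) (Rop : F →L[ℂ] F) : Prop :=
  (∀ (ψ : F) (ψ0 : H1), c.j1 ψ0 = ψ - c.G (lam : ℂ) ψ →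
    Rop (z • ψ - HSf ψ ψ0) = ψ) ∧
  (∀ χ : F, ∃ (ψ : F) (ψ0 : H1),
    c.j1 ψ0 = ψ - c.G (lam : ℂ) ψ ∧ Rop χ = ψ ∧ z • ψ - HSf ψ ψ0 = χ)

/-- `ψ ∈ 𝔥_s` (for `0 ≤ s ≤ 1`), i.e. `ψ ∈ 𝔉` is the limit of a `‖·‖_s`-Cauchy sequence
of elements of `𝔥₁`. -/
def memHs (s : ℝ) (ψ : F) : Prop :=
  ∃ u : ℕ → H1, Filter.Tendsto (fun n => c.j1 (u n)) Filter.atTop (nhds ψ) ∧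
    ∀ ε > 0, ∃ N, ∀ m ≥ N, ∀ n ≥ N, c.ns s (u m - u n) < ε

/-- `T ∈ 𝔅(𝔥_s, 𝔉)` (with `T` given on `𝔥₁`): `T` is bounded for the `‖·‖_s`-norm. -/
def MemBs (s : ℝ) (T : H1 →L[ℂ] F) : Prop :=
  ∃ C : ℝ, 0 ≤ C ∧ ∀ ψ : H1, ‖T ψ‖ ≤ C * c.ns s ψ

/-- `T` (with domain containing `𝔥₁ ⊆ 𝔥_{1/2}`) is closable as an operator in `𝔉`. -/
def ClosableOp (T : H1 →L[ℂ] F) : Prop :=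
  ∀ (u : ℕ → H1) (χ : F),
    Filter.Tendsto (fun n => c.j1 (u n)) Filter.atTop (nhds 0) →
    Filter.Tendsto (fun n => T (u n)) Filter.atTop (nhds χ) → χ = 0

/-- `Tstar` is (the restriction to `𝔥₁` of) the adjoint of `T`. -/
def IsAdjointOn (T Tstar : H1 →L[ℂ] F) : Prop :=
  ∀ ψ φ : H1, ⟪Tstar ψ, c.j1 φ⟫ = ⟪c.j1 ψ, T φ⟫

/-- `G_{n,z} := (A_n R_{z̄})* ∈ 𝔅(𝔉)`. -/
def Gn (An : H1 →L[ℂ] F) (z : ℂ) : F →L[ℂ] F :=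
  ContinuousLinearMap.adjoint (An.comp (c.RF (starRingEnd ℂ z)))

/-- `B = A_n R A_n* ∈ 𝔅(𝔉)`: since `R A_n*ψ = G_{n,λ∘}ψ ∈ 𝔥₁`, the operator `B` is
`A_n` applied to the lift of `G_{n,λ∘}ψ`. -/
def IsAnRAn (lam : ℝ) (An : H1 →L[ℂ] F) (B : F →L[ℂ] F) : Prop :=
  ∀ ψ : F, ∃ φ : H1, c.j1 φ = c.Gn An (lam : ℂ) ψ ∧ B ψ = An φ

/-- `𝔾_{n,z}` as a bounded operator `𝔉⊕𝔉 → 𝔉`, `ψ⊕φ ↦ G_{n,z}ψ + R_zφ`. -/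
def Gnb (An : H1 →L[ℂ] F) (z : ℂ) : (F × F) →L[ℂ] F :=
  (c.Gn An z).comp (ContinuousLinearMap.fst ℂ F F) +
    (c.j1.comp (c.RF z)).comp (ContinuousLinearMap.snd ℂ F F)

/-- `𝔾_{n,z̄}* : 𝔉 → 𝔉⊕𝔉`, `ψ ↦ (A_n R_z ψ) ⊕ (R_z ψ)`. -/
def Gnbstar (An : H1 →L[ℂ] F) (z : ℂ) : F →L[ℂ] (F × F) :=
  (An.comp (c.RF z)).prod (c.j1.comp (c.RF z))

/-- `M_{n,z} = 𝔸_n(𝔾_n - 𝔾_{n,z}) = (z-λ∘)𝔾_n*𝔾_{n,z} : 𝔉⊕𝔉 → 𝔉⊕𝔥₁ ⊆ 𝔉⊕𝔉`. -/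
def Mn (lam : ℝ) (An : H1 →L[ℂ] F) (z : ℂ) : (F × F) →L[ℂ] (F × F) :=
  (z - (lam : ℂ)) • ((c.Gnbstar An (lam : ℂ)).comp (c.Gnb An z))

/-- `Θ_n = [[E_n - A_nRA_n*, 1-G_n*],[1-G_n, -R]] : 𝔉⊕𝔉 → 𝔉⊕𝔉`. -/
def Thetan (lam : ℝ) (An : H1 →L[ℂ] F) (En AnRAn : F →L[ℂ] F) :
    (F × F) →L[ℂ] (F × F) :=
  ((En - AnRAn).comp (ContinuousLinearMap.fst ℂ F F) +
      ((1 : F →L[ℂ] F) - An.comp (c.RF (lam : ℂ))).comp (ContinuousLinearMap.snd ℂ F F)).prod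
    (((1 : F →L[ℂ] F) - c.Gn An (lam : ℂ)).comp (ContinuousLinearMap.fst ℂ F F) -
      (c.j1.comp (c.RF (lam : ℂ))).comp (ContinuousLinearMap.snd ℂ F F))

end Ctx

/-! ### Auxiliary lemmas for the proof of Statement 7 -/

namespace Ctx

variable (c : Ctx F H1 Hm1)

lemma conj_mem_res {z : ℂ} (hz : z ∈ c.res) : (starRingEnd ℂ) z ∈ c.res := by
  by_cases h : z.im = 0
  · rwa [Complex.conj_eq_iff_im.mpr h]
  · exact c.res_nonreal _ (by simp [Complex.conj_im, h])

lemma RF_char {z : ℂ} (hz : z ∈ c.res) (ψ : H1) :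
    c.RF z (z • c.j1 ψ - c.Hop ψ) = ψ := by
  have := congrArg (fun T => T ψ) (c.RF_inv_left z hz)
  simpa using this

lemma char_RF {z : ℂ} (hz : z ∈ c.res) (χ : F) :
    z • c.j1 (c.RF z χ) - c.Hop (c.RF z χ) = χ := by
  have := congrArg (fun T => T χ) (c.RF_inv_right z hz)
  simpa using this

lemma RM_char {z : ℂ} (hz : z ∈ c.res) (u : F) :
    c.RM z (z • c.jm u - c.Hbar u) = u := by
  have := congrArg (fun T => T u) (c.RM_inv_left z hz)
  simpa using this

lemma char_RM {z : ℂ} (hz : z ∈ c.res) (x : Hm1) :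
    z • c.jm (c.RM z x) - c.Hbar (c.RM z x) = x := by
  have := congrArg (fun T => T x) (c.RM_inv_right z hz)
  simpa using this

lemma RM_jm {z : ℂ} (hz : z ∈ c.res) (u : F) :
    c.RM z (c.jm u) = c.j1 (c.RF z u) := by
  have := congrArg (fun T => T u) (c.RM_ext z hz)
  simpa using this

lemma RF_diff {z w : ℂ} (hz : z ∈ c.res) (hw : w ∈ c.res) (χ : F) :
    c.RF z χ - c.RF w χ = (w - z) • c.RF z (c.j1 (c.RF w χ)) := by
  have h : w • c.j1 (c.RF w χ) - c.Hop (c.RF w χ) = χ := c.char_RF hw χ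
  have e : w • c.j1 (c.RF w χ) - c.Hop (c.RF w χ)
      = (z • c.j1 (c.RF w χ) - c.Hop (c.RF w χ)) + (w - z) • c.j1 (c.RF w χ) := by
    module
  calc c.RF z χ - c.RF w χ
      = c.RF z ((z • c.j1 (c.RF w χ) - c.Hop (c.RF w χ)) + (w - z) • c.j1 (c.RF w χ))
        - c.RF w χ := by rw [← e, h]
    _ = (w - z) • c.RF z (c.j1 (c.RF w χ)) := by
        rw [map_add, c.RF_char hz, map_smul]; abel

lemma RF_diff' {z w : ℂ} (hz : z ∈ c.res) (hw : w ∈ c.res) (χ : F) :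
    c.RF z χ - c.RF w χ = (w - z) • c.RF w (c.j1 (c.RF z χ)) := by
  have h := c.RF_diff hw hz χ
  have e : c.RF z χ - c.RF w χ = -(c.RF w χ - c.RF z χ) := by abel
  rw [e, h, ← neg_smul, neg_sub]

lemma Rop_adj {z : ℂ} (hz : z ∈ c.res) (χ χ' : F) :
    ⟪c.j1 (c.RF ((starRingEnd ℂ) z) χ), χ'⟫ = ⟪χ, c.j1 (c.RF z χ')⟫ := by
  have hχ : (starRingEnd ℂ) z • c.j1 (c.RF ((starRingEnd ℂ) z) χ)
      - c.Hop (c.RF ((starRingEnd ℂ) z) χ) = χ := c.char_RF (c.conj_mem_res hz) χ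
  have hχ' : z • c.j1 (c.RF z χ') - c.Hop (c.RF z χ') = χ' := c.char_RF hz χ'
  calc ⟪c.j1 (c.RF ((starRingEnd ℂ) z) χ), χ'⟫
      = ⟪c.j1 (c.RF ((starRingEnd ℂ) z) χ), z • c.j1 (c.RF z χ') - c.Hop (c.RF z χ')⟫ := by
        rw [hχ']
    _ = z * ⟪c.j1 (c.RF ((starRingEnd ℂ) z) χ), c.j1 (c.RF z χ')⟫
        - ⟪c.Hop (c.RF ((starRingEnd ℂ) z) χ), c.j1 (c.RF z χ')⟫ := by
        rw [inner_sub_right, inner_smul_right, c.Hsymm]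
    _ = ⟪(starRingEnd ℂ) z • c.j1 (c.RF ((starRingEnd ℂ) z) χ)
        - c.Hop (c.RF ((starRingEnd ℂ) z) χ), c.j1 (c.RF z χ')⟫ := by
        rw [inner_sub_left, inner_smul_left, Complex.conj_conj]
    _ = ⟪χ, c.j1 (c.RF z χ')⟫ := by rw [hχ]

lemma Rop_adj' {z : ℂ} (hz : z ∈ c.res) (χ χ' : F) :
    ⟪c.j1 (c.RF z χ), χ'⟫ = ⟪χ, c.j1 (c.RF ((starRingEnd ℂ) z) χ')⟫ := by
  have := c.Rop_adj (c.conj_mem_res hz) χ χ'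
  rwa [Complex.conj_conj] at this

lemma G_apply_adj (z : ℂ) (ψ χ : F) :
    ⟪c.G z ψ, χ⟫ = ⟪ψ, c.A (c.RF ((starRingEnd ℂ) z) χ)⟫ := by
  simp [Ctx.G, ContinuousLinearMap.adjoint_inner_left]

lemma G_apply_adj' (z : ℂ) (χ ψ : F) :
    ⟪χ, c.G z ψ⟫ = ⟪c.A (c.RF ((starRingEnd ℂ) z) χ), ψ⟫ := by
  simp [Ctx.G, ContinuousLinearMap.adjoint_inner_right]

lemma G_diff {z w : ℂ} (hz : z ∈ c.res) (hw : w ∈ c.res) (ψ : F) :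
    c.G z ψ - c.G w ψ = (w - z) • c.j1 (c.RF z (c.G w ψ)) := by
  apply ext_inner_right ℂ
  intro χ'
  rw [inner_sub_left, inner_smul_left, c.G_apply_adj, c.G_apply_adj,
    c.Rop_adj' hz, c.G_apply_adj, ← inner_sub_right, ← inner_smul_right]
  congr 1
  rw [← map_smul, ← map_sub]
  congr 1
  rw [c.RF_diff' (c.conj_mem_res hz) (c.conj_mem_res hw), ← map_sub]

lemma RM_diff {z w : ℂ} (hz : z ∈ c.res) (hw : w ∈ c.res) (x : Hm1) :
    c.RM z x - c.RM w x = (w - z) • c.j1 (c.RF z (c.RM w x)) := by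
  have h : w • c.jm (c.RM w x) - c.Hbar (c.RM w x) = x := c.char_RM hw x
  have e : w • c.jm (c.RM w x) - c.Hbar (c.RM w x)
      = (z • c.jm (c.RM w x) - c.Hbar (c.RM w x)) + (w - z) • c.jm (c.RM w x) := by
    module
  calc c.RM z x - c.RM w x
      = c.RM z ((z • c.jm (c.RM w x) - c.Hbar (c.RM w x)) + (w - z) • c.jm (c.RM w x))
        - c.RM w x := by rw [← e, h]
    _ = (w - z) • c.RM z (c.jm (c.RM w x)) := by
        rw [map_add, c.RM_char hz, map_smul]; abel
    _ = (w - z) • c.j1 (c.RF z (c.RM w x)) := by rw [c.RM_jm hz]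

lemma Gb_apply (z : ℂ) (x : F × Hm1) : c.Gb z x = c.G z x.1 + c.RM z x.2 := rfl

lemma Gb_diff {z w : ℂ} (hz : z ∈ c.res) (hw : w ∈ c.res) (x : F × Hm1) :
    c.Gb z x - c.Gb w x = (w - z) • c.j1 (c.RF z (c.Gb w x)) := by
  rw [c.Gb_apply z, c.Gb_apply w]
  have e : c.G z x.1 + c.RM z x.2 - (c.G w x.1 + c.RM w x.2)
      = (c.G z x.1 - c.G w x.1) + (c.RM z x.2 - c.RM w x.2) := by abel
  rw [e, c.G_diff hz hw, c.RM_diff hz hw, ← smul_add, ← map_add, ← map_add]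

lemma Gbstar_apply (z : ℂ) (χ : F) : c.Gbstar z χ = (c.A (c.RF z χ), c.RF z χ) := rfl

lemma Gbstar_diff {z w : ℂ} (hz : z ∈ c.res) (hw : w ∈ c.res) (χ : F) :
    c.Gbstar z χ - c.Gbstar w χ = (w - z) • c.Gbstar w (c.j1 (c.RF z χ)) := by
  have h := c.RF_diff' hz hw χ
  rw [c.Gbstar_apply, c.Gbstar_apply, c.Gbstar_apply, Prod.mk_sub_mk, Prod.smul_mk,
    Prod.mk.injEq]
  exact ⟨by rw [← map_sub, h, map_smul], h⟩

lemma M_apply (lam : ℝ) (z : ℂ) (x : F × Hm1) :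
    c.M lam z x = (z - (lam : ℂ)) • c.Gbstar (lam : ℂ) (c.Gb z x) := rfl

lemma M_diff {lam : ℝ} {z w : ℂ} (hz : z ∈ c.res) (hw : w ∈ c.res)
    (hl : ((lam : ℂ) : ℂ) ∈ c.res) (x : F × Hm1) :
    c.M lam z x - c.M lam w x = (z - w) • c.Gbstar z (c.Gb w x) := by
  have hgb : c.Gb z x = c.Gb w x + (w - z) • c.j1 (c.RF z (c.Gb w x)) := by
    have h := c.Gb_diff hz hw x
    rw [← h]; abel
  have hgs : c.Gbstar z (c.Gb w x) = c.Gbstar (lam : ℂ) (c.Gb w x)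
      + ((lam : ℂ) - z) • c.Gbstar (lam : ℂ) (c.j1 (c.RF z (c.Gb w x))) := by
    have h := c.Gbstar_diff hz hl (c.Gb w x)
    rw [← h]; abel
  rw [c.M_apply, c.M_apply, hgb, map_add, map_smul, hgs]
  module

lemma M_diff' {lam : ℝ} {z w : ℂ} (hz : z ∈ c.res) (hw : w ∈ c.res)
    (hl : ((lam : ℂ) : ℂ) ∈ c.res) (x : F × Hm1) :
    c.M lam z x - c.M lam w x = (z - w) • c.Gbstar w (c.Gb z x) := by
  have h := c.M_diff hw hz hl x
  have e : c.M lam z x - c.M lam w x = -(c.M lam w x - c.M lam z x) := by abel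
  rw [e, h, ← neg_smul, neg_sub]

lemma Lam_rel {lam : ℝ} {S : H1 →ₗ[ℂ] F} {z w : ℂ} {Λz Λw : (F × H1) →L[ℂ] (F × Hm1)}
    (hz : c.IsInvTheta lam S z Λz) (hw : c.IsInvTheta lam S w Λw) (y : F × H1) :
    Λz y = Λw y - Λz (c.M lam z (Λw y) - c.M lam w (Λw y)) := by
  obtain ⟨ψ, ψ0, φ, h0, hy, hT⟩ := hw.2 y
  have h1 : c.ThetaMS lam S z ψ ψ0 φ
      = y + (c.M lam z (Λw y) - c.M lam w (Λw y)) := by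
    rw [hy, ← hT]
    simp only [Ctx.ThetaMS]
    abel
  have h2 := hz.1 ψ ψ0 φ h0
  rw [h1, map_add, ← hy] at h2
  exact eq_sub_of_add_eq h2

lemma Rhat_apply (z : ℂ) (Λ : (F × H1) →L[ℂ] (F × Hm1)) (χ : F) :
    c.Rhat z Λ χ = c.j1 (c.RF z χ) + c.Gb z (Λ (c.Gbstar z χ)) := rfl

lemma Rhat_diff {lam : ℝ} {S : H1 →ₗ[ℂ] F} {z w : ℂ} {Λz Λw : (F × H1) →L[ℂ] (F × Hm1)}
    (hzr : z ∈ c.res) (hwr : w ∈ c.res) (hl : ((lam : ℂ) : ℂ) ∈ c.res)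
    (hz : c.IsInvTheta lam S z Λz) (hw : c.IsInvTheta lam S w Λw) (χ : F) :
    c.Rhat w Λw χ - c.Rhat z Λz χ = (z - w) • c.Rhat w Λw (c.Rhat z Λz χ) := by
  set u := Λz (c.Gbstar z χ) with hu
  have t1 : (z - w) • c.j1 (c.RF w (c.j1 (c.RF z χ))) = c.j1 (c.RF w χ) - c.j1 (c.RF z χ) := by
    have e1 : c.j1 (c.RF z χ) - c.j1 (c.RF w χ)
        = (w - z) • c.j1 (c.RF w (c.j1 (c.RF z χ))) := by
      rw [← map_sub, c.RF_diff' hzr hwr χ, map_smul]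
    rw [show (z - w) = -(w - z) by ring, neg_smul, ← e1, neg_sub]
  have t2 : (z - w) • c.j1 (c.RF w (c.Gb z u)) = c.Gb w u - c.Gb z u := by
    rw [← c.Gb_diff hwr hzr u]
  have t3 : (z - w) • c.Gb w (Λw (c.Gbstar w (c.j1 (c.RF z χ))))
      = c.Gb w (Λw (c.Gbstar w χ)) - c.Gb w (Λw (c.Gbstar z χ)) := by
    rw [← map_smul, ← map_smul]
    have e3 : (z - w) • c.Gbstar w (c.j1 (c.RF z χ)) = c.Gbstar w χ - c.Gbstar z χ := by
      rw [show (z - w) = -(w - z) by ring, neg_smul, ← c.Gbstar_diff hzr hwr χ, neg_sub]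
    rw [e3, map_sub, map_sub]
  have t4 : (z - w) • c.Gb w (Λw (c.Gbstar w (c.Gb z u)))
      = c.Gb w (Λw (c.Gbstar z χ)) - c.Gb w u := by
    rw [← map_smul, ← map_smul]
    have e4 : (z - w) • c.Gbstar w (c.Gb z u) = c.M lam z u - c.M lam w u :=
      (c.M_diff' hzr hwr hl u).symm
    have e5 : Λw (c.M lam z u - c.M lam w u) = Λw (c.Gbstar z χ) - u := by
      have h := c.Lam_rel hw hz (c.Gbstar z χ)
      rw [← hu] at h
      rw [h, show c.M lam w u - c.M lam z u = -(c.M lam z u - c.M lam w u) by abel, map_neg]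
      abel
    rw [e4, e5, map_sub]
  rw [c.Rhat_apply w Λw χ, c.Rhat_apply z Λz χ, ← hu, c.Rhat_apply w Λw]
  simp only [map_add, smul_add]
  rw [t1, t2, t3, t4]
  abel

lemma Gst_apply (lam : ℝ) (χ : F) : c.Gst lam χ = c.A (c.RF (lam : ℂ) χ) := by
  unfold Ctx.Gst Ctx.G
  rw [Complex.conj_ofReal, ContinuousLinearMap.adjoint_adjoint]
  rfl

lemma G_real_adj (lam : ℝ) (ψ χ : F) :
    ⟪c.G (lam : ℂ) ψ, χ⟫ = ⟪ψ, c.A (c.RF (lam : ℂ) χ)⟫ := by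
  rw [c.G_apply_adj, Complex.conj_ofReal]

lemma G_real_adj' (lam : ℝ) (χ ψ : F) :
    ⟪χ, c.G (lam : ℂ) ψ⟫ = ⟪c.A (c.RF (lam : ℂ) χ), ψ⟫ := by
  rw [c.G_apply_adj', Complex.conj_ofReal]

lemma Rop_real_adj {lam : ℝ} (hl : ((lam : ℂ) : ℂ) ∈ c.res) (χ χ' : F) :
    ⟪c.j1 (c.RF (lam : ℂ) χ), χ'⟫ = ⟪χ, c.j1 (c.RF (lam : ℂ) χ')⟫ := by
  have := c.Rop_adj hl χ χ'
  rwa [Complex.conj_ofReal] at this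

lemma M_self (lam : ℝ) (x : F × Hm1) : c.M lam (lam : ℂ) x = 0 := by
  rw [c.M_apply, sub_self, zero_smul]

lemma Rhat_lam_inj {lam : ℝ} (hl : ((lam : ℂ) : ℂ) ∈ c.res) (hH3 : c.H3)
    {S : H1 →ₗ[ℂ] F} {Λ₀ : (F × H1) →L[ℂ] (F × Hm1)}
    (h₀ : c.IsInvTheta lam S (lam : ℂ) Λ₀) (χ : F)
    (hB : c.Rhat (lam : ℂ) Λ₀ χ = 0) : χ = 0 := by
  obtain ⟨ψ, ψ0, φ, h0, hy, hT⟩ := h₀.2 (c.Gbstar (lam : ℂ) χ)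
  rw [Ctx.ThetaMS, c.M_self, add_zero] at hT
  have e1 : S ψ0 - c.Gst lam (S ψ0) + φ - c.Gst lam φ = c.A (c.RF (lam : ℂ) χ) :=
    congrArg Prod.fst hT
  have e2 : ψ0 - c.RF (lam : ℂ) φ = c.RF (lam : ℂ) χ :=
    congrArg Prod.snd hT
  rw [c.Rhat_apply, hy] at hB
  have hGbv : c.Gb (lam : ℂ) (ψ, c.jm φ) = c.G (lam : ℂ) ψ + c.j1 (c.RF (lam : ℂ) φ) := by
    rw [c.Gb_apply, c.RM_jm hl]
  rw [hGbv] at hB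
  -- hB : j1 (RF λ χ) + (G λ ψ + j1 (RF λ φ)) = 0
  have hB' : (c.j1 (c.RF (lam : ℂ) χ) + c.j1 (c.RF (lam : ℂ) φ)) + c.G (lam : ℂ) ψ = 0 := by
    rw [← hB]; abel
  have hGran : c.G (lam : ℂ) ψ
      = c.j1 (-(c.RF (lam : ℂ) χ + c.RF (lam : ℂ) φ)) := by
    rw [map_neg, map_add]
    exact eq_neg_of_add_eq_zero_right hB'
  have hG0 : c.G (lam : ℂ) ψ = 0 := hH3 _ hl ψ _ hGran
  have hsum : c.RF (lam : ℂ) χ + c.RF (lam : ℂ) φ = 0 := by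
    apply c.j1_inj
    rw [map_add, map_zero]
    rw [hG0, add_zero] at hB'
    exact hB'
  have hχφ : χ + φ = 0 := by
    have e : χ + φ = (lam : ℂ) • (c.j1 (c.RF (lam : ℂ) χ) + c.j1 (c.RF (lam : ℂ) φ))
        - (c.Hop (c.RF (lam : ℂ) χ) + c.Hop (c.RF (lam : ℂ) φ)) := by
      rw [smul_add]
      conv_lhs => rw [← c.char_RF hl χ, ← c.char_RF hl φ]
      abel
    have hj : c.j1 (c.RF (lam : ℂ) χ) + c.j1 (c.RF (lam : ℂ) φ) = 0 := by
      rw [← map_add, hsum, map_zero]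
    have hh : c.Hop (c.RF (lam : ℂ) χ) + c.Hop (c.RF (lam : ℂ) φ) = 0 := by
      rw [← map_add, hsum, map_zero]
    rw [e, hj, hh, smul_zero, sub_zero]
  have hψ0 : ψ0 = 0 := by
    have e : ψ0 = c.RF (lam : ℂ) χ + c.RF (lam : ℂ) φ := by
      rw [← e2]; abel
    rw [e, hsum]
  have hφ : φ = -χ := eq_neg_of_add_eq_zero_right hχφ
  rw [hψ0, hφ] at e1
  rw [map_zero, map_zero, map_neg, c.Gst_apply] at e1
  have e1' : -χ + c.A (c.RF (lam : ℂ) χ) = c.A (c.RF (lam : ℂ) χ) := by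
    rw [show -χ + c.A (c.RF (lam : ℂ) χ)
      = (0 : F) - 0 + -χ - -(c.A (c.RF (lam : ℂ) χ)) by abel]
    exact e1
  have hneg : -χ = 0 := by
    have h3 := eq_sub_of_add_eq e1'
    rwa [sub_self] at h3
  simpa [neg_eq_zero] using hneg

lemma Rhat_lam_symm {lam : ℝ} (hl : ((lam : ℂ) : ℂ) ∈ c.res)
    {S : H1 →ₗ[ℂ] F} (hS : c.IsSymmOp S) {Λ₀ : (F × H1) →L[ℂ] (F × Hm1)}
    (h₀ : c.IsInvTheta lam S (lam : ℂ) Λ₀) (χ χ' : F) :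
    ⟪c.Rhat (lam : ℂ) Λ₀ χ, χ'⟫ = ⟪χ, c.Rhat (lam : ℂ) Λ₀ χ'⟫ := by
  obtain ⟨ψ, ψ0, φ, h0, hy, hT⟩ := h₀.2 (c.Gbstar (lam : ℂ) χ)
  obtain ⟨ψ', ψ0', φ', h0', hy', hT'⟩ := h₀.2 (c.Gbstar (lam : ℂ) χ')
  rw [Ctx.ThetaMS, c.M_self, add_zero] at hT hT'
  have e1 : S ψ0 - c.Gst lam (S ψ0) + φ - c.Gst lam φ = c.A (c.RF (lam : ℂ) χ) :=
    congrArg Prod.fst hT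
  have e2 : ψ0 - c.RF (lam : ℂ) φ = c.RF (lam : ℂ) χ := congrArg Prod.snd hT
  have e1' : S ψ0' - c.Gst lam (S ψ0') + φ' - c.Gst lam φ' = c.A (c.RF (lam : ℂ) χ') :=
    congrArg Prod.fst hT'
  have e2' : ψ0' - c.RF (lam : ℂ) φ' = c.RF (lam : ℂ) χ' := congrArg Prod.snd hT'
  have flip : ∀ (x χ0 : F), ⟪x, c.Gst lam χ0⟫ = ⟪c.G (lam : ℂ) x, χ0⟫ := fun x χ0 => by
    rw [c.Gst_apply, ← c.G_real_adj]
  have flip' : ∀ (χ0 x : F), ⟪c.Gst lam χ0, x⟫ = ⟪χ0, c.G (lam : ℂ) x⟫ := fun χ0 x => by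
    rw [c.Gst_apply, ← c.G_real_adj']
  have q1 : ⟪ψ, c.A (c.RF (lam : ℂ) χ')⟫ = ⟪c.j1 ψ0, S ψ0'⟫ + ⟪c.j1 ψ0, φ'⟫ := by
    rw [← e1']
    simp only [inner_sub_right, inner_add_right, flip]
    rw [h0]
    simp only [inner_sub_left]
    ring
  have q2 : ⟪φ, c.j1 (c.RF (lam : ℂ) χ')⟫
      = ⟪φ, c.j1 ψ0'⟫ - ⟪φ, c.j1 (c.RF (lam : ℂ) φ')⟫ := by
    rw [← e2', map_sub, inner_sub_right]
  have q3 : ⟪c.A (c.RF (lam : ℂ) χ), ψ'⟫ = ⟪S ψ0, c.j1 ψ0'⟫ + ⟪φ, c.j1 ψ0'⟫ := by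
    rw [← e1]
    simp only [inner_sub_left, inner_add_left, flip']
    rw [h0']
    simp only [inner_sub_right]
    ring
  have q4 : ⟪χ, c.j1 (c.RF (lam : ℂ) φ')⟫
      = ⟪c.j1 ψ0, φ'⟫ - ⟪c.j1 (c.RF (lam : ℂ) φ), φ'⟫ := by
    rw [← c.Rop_real_adj hl χ φ', ← e2, map_sub, inner_sub_left]
  have p0 := c.Rop_real_adj hl χ χ'
  have p1 := c.G_real_adj lam ψ χ'
  have p2 := c.Rop_real_adj hl φ χ'
  have p3 := c.G_real_adj' lam χ ψ'
  have hs := hS ψ0 ψ0'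
  have hr := c.Rop_real_adj hl φ φ'
  have hGbv : c.Gb (lam : ℂ) (ψ, c.jm φ) = c.G (lam : ℂ) ψ + c.j1 (c.RF (lam : ℂ) φ) := by
    rw [c.Gb_apply, c.RM_jm hl]
  have hGbv' : c.Gb (lam : ℂ) (ψ', c.jm φ') = c.G (lam : ℂ) ψ' + c.j1 (c.RF (lam : ℂ) φ') := by
    rw [c.Gb_apply, c.RM_jm hl]
  rw [c.Rhat_apply, c.Rhat_apply, hy, hy', hGbv, hGbv']
  simp only [inner_add_left, inner_add_right]
  linear_combination p0 + p1 + q1 + p2 + q2 - p3 - q3 - q4 - hs + hr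

end Ctx

/-- Abstract preimage function for an injective bounded operator. -/
noncomputable def auxPre (B : F →L[ℂ] F) (x : LinearMap.range (B : F →ₗ[ℂ] F)) : F :=
  (LinearMap.mem_range.mp x.2).choose

lemma auxPre_spec (B : F →L[ℂ] F) (x : LinearMap.range (B : F →ₗ[ℂ] F)) :
    B (auxPre B x) = (x : F) :=
  (LinearMap.mem_range.mp x.2).choose_spec

lemma auxPre_eq (B : F →L[ℂ] F) (hinj : Function.Injective B)
    (x : LinearMap.range (B : F →ₗ[ℂ] F)) (χ : F) (h : B χ = (x : F)) :
    auxPre B x = χ :=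
  hinj (by rw [auxPre_spec, h])

/-- The operator `T = λ∘ - B⁻¹` on the range of `B`. -/
noncomputable def auxT (lam : ℝ) (B : F →L[ℂ] F) (hinj : Function.Injective B) :
    LinearMap.range (B : F →ₗ[ℂ] F) →ₗ[ℂ] F where
  toFun x := (lam : ℂ) • (x : F) - auxPre B x
  map_add' x y := by
    have h : auxPre B (x + y) = auxPre B x + auxPre B y :=
      auxPre_eq B hinj _ _ (by rw [map_add, auxPre_spec, auxPre_spec, Submodule.coe_add])
    rw [h, Submodule.coe_add, smul_add]
    abel
  map_smul' a x := by
    dsimp only [RingHom.id_apply]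
    have h : auxPre B (a • x) = a • auxPre B x :=
      auxPre_eq B hinj _ _ (by rw [map_smul, auxPre_spec, Submodule.coe_smul])
    rw [h, Submodule.coe_smul, smul_sub, smul_comm]

open scoped LinearPMap

/-- Let `H` be self-adjoint and bounded from below, let `A ∈ 𝔅(𝔥₁,𝔉)`
satisfy assumption (H3), and suppose `λ∘ ∈ Z_S`.  Then the family of bounded operators
`R̂_z := R_z + 𝔾_z (Θ_S + M_z)⁻¹ 𝔾_{z̄}*`, `z ∈ Z_S`, is the resolvent of a (densely
defined) self-adjoint operator in `𝔉`. -/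
theorem statement7 (c : Ctx F H1 Hm1) (lam : ℝ) (hlam : lam < c.lamInf)
    (hH3 : c.H3) (S : H1 →ₗ[ℂ] F) (hS : c.IsSymmOp S)
    (hZ : (lam : ℂ) ∈ c.ZS lam S) :
    ∃ T : F →ₗ.[ℂ] F, IsSelfAdjoint T ∧ Dense (T.domain : Set F) ∧
      ∀ z ∈ c.ZS lam S, ∀ Λ : (F × H1) →L[ℂ] (F × Hm1), c.IsInvTheta lam S z Λ →
        (∀ x : T.domain, c.Rhat z Λ (z • (x : F) - T x) = (x : F)) ∧
        (∀ χ : F, ∃ x : T.domain, c.Rhat z Λ χ = (x : F) ∧ z • (x : F) - T x = χ) := by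
  classical
  obtain ⟨hlres, Λ₀, hΛ₀⟩ := hZ
  set B : F →L[ℂ] F := c.Rhat (lam : ℂ) Λ₀ with hBdef
  have hinj : Function.Injective B := by
    intro a b hab
    have h0 : B (a - b) = 0 := by rw [map_sub, hab, sub_self]
    have h1 := c.Rhat_lam_inj hlres hH3 hΛ₀ (a - b) h0
    exact sub_eq_zero.mp h1
  have hsym : ∀ χ χ', ⟪B χ, χ'⟫ = ⟪χ, B χ'⟫ := fun χ χ' =>
    c.Rhat_lam_symm hlres hS hΛ₀ χ χ'
  set D : Submodule ℂ F := LinearMap.range (B : F →ₗ[ℂ] F) with hDdef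
  have hmemD : ∀ χ, B χ ∈ D := fun χ => ⟨χ, rfl⟩
  set T : F →ₗ.[ℂ] F := LinearPMap.mk D (auxT lam B hinj) with hTdef
  have hTapp : ∀ x : D, T x = (lam : ℂ) • (x : F) - auxPre B x := fun x => rfl
  have hTB : ∀ χ : F, T ⟨B χ, hmemD χ⟩ = (lam : ℂ) • B χ - χ := by
    intro χ
    rw [hTapp, auxPre_eq B hinj _ χ rfl]
  have hdense : Dense (D : Set F) := by
    rw [Submodule.dense_iff_topologicalClosure_eq_top, Submodule.topologicalClosure_eq_top_iff,
      Submodule.eq_bot_iff]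
    intro x hx
    have hx0 : ∀ χ, ⟪B χ, x⟫ = 0 := fun χ => (Submodule.mem_orthogonal D x).mp hx _ (hmemD χ)
    have hBx : B x = 0 := by
      apply ext_inner_right ℂ
      intro v
      rw [inner_zero_left, hsym]
      have h2 : ⟪x, B v⟫ = (starRingEnd ℂ) ⟪B v, x⟫ := (inner_conj_symm _ _).symm
      rw [h2, hx0 v, map_zero]
    exact hinj (by rw [hBx, map_zero])
  have hTdense : Dense (T.domain : Set F) := hdense
  have hformal : T.IsFormalAdjoint T := by
    intro x y
    rw [hTapp, hTapp]
    rw [inner_sub_left, inner_sub_right, inner_smul_left, inner_smul_right,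
      Complex.conj_ofReal]
    have h1 : ⟪auxPre B x, (y : F)⟫ = ⟪(x : F), auxPre B y⟫ := by
      rw [← auxPre_spec B y, ← hsym, auxPre_spec]
    rw [h1]
  have hle1 : T ≤ T† := hformal.le_adjoint hTdense
  have hform : T†.IsFormalAdjoint T := LinearPMap.adjoint_isFormalAdjoint hTdense
  have hmain : ∀ y : T†.domain, B ((lam : ℂ) • (y : F) - T† y) = (y : F) := by
    intro y
    apply ext_inner_right ℂ
    intro χ
    have h := hform y ⟨B χ, hmemD χ⟩
    rw [hTB] at h
    have hr : ⟪B ((lam : ℂ) • (y : F) - T† y), χ⟫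
        = (lam : ℂ) * ⟪(y : F), B χ⟫ - ⟪T† y, B χ⟫ := by
      rw [hsym, inner_sub_left, inner_smul_left, Complex.conj_ofReal]
    have hh : ⟪(y : F), (lam : ℂ) • B χ - χ⟫
        = (lam : ℂ) * ⟪(y : F), B χ⟫ - ⟪(y : F), χ⟫ := by
      rw [inner_sub_right, inner_smul_right]
    rw [hr, h, hh]
    ring
  have hle2 : T† ≤ T := by
    refine ⟨fun yv hy => ⟨(lam : ℂ) • yv - T† ⟨yv, hy⟩, hmain ⟨yv, hy⟩⟩, fun x y hxy => ?_⟩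
    have hx := hmain x
    rw [hTapp y]
    have hpre : auxPre B y = (lam : ℂ) • (x : F) - T† x :=
      auxPre_eq B hinj y _ (by rw [hx]; exact hxy)
    rw [hpre, ← hxy, sub_sub_cancel]
  have hsa : IsSelfAdjoint T := LinearPMap.isSelfAdjoint_def.mpr (le_antisymm hle2 hle1)
  refine ⟨T, hsa, hTdense, ?_⟩
  intro z hzZ Λ hΛ
  obtain ⟨hzres, _⟩ := hzZ
  have hid1 : ∀ χ, B χ - c.Rhat z Λ χ = (z - (lam : ℂ)) • c.Rhat z Λ (B χ) := by
    intro χ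
    have h := c.Rhat_diff (z := (lam : ℂ)) (w := z) hlres hzres hlres hΛ₀ hΛ χ
    have e : B χ - c.Rhat z Λ χ = -(c.Rhat z Λ χ - B χ) := by abel
    rw [e, h, ← neg_smul, neg_sub]
  have hid2 : ∀ χ, B χ - c.Rhat z Λ χ = (z - (lam : ℂ)) • B (c.Rhat z Λ χ) := fun χ =>
    c.Rhat_diff (z := z) (w := (lam : ℂ)) hzres hlres hlres hΛ hΛ₀ χ
  have esum : ∀ a b : F, a - b + b = a := fun a b => by abel
  constructor
  · intro x
    have hx : B (auxPre B x) = (x : F) := auxPre_spec B x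
    have harg : z • (x : F) - T x
        = (z - (lam : ℂ)) • B (auxPre B x) + auxPre B x := by
      rw [hTapp x, ← hx]
      module
    rw [harg, map_add, map_smul, ← hid1 (auxPre B x), esum, hx]
  · intro χ
    set χ₀ := χ - (z - (lam : ℂ)) • c.Rhat z Λ χ with hχ₀
    have hBχ₀ : B χ₀ = c.Rhat z Λ χ := by
      rw [hχ₀, map_sub, map_smul, ← hid2 χ, sub_sub_cancel]
    refine ⟨⟨B χ₀, hmemD χ₀⟩, hBχ₀.symm, ?_⟩
    rw [hTB χ₀]
    show z • B χ₀ - ((lam : ℂ) • B χ₀ - χ₀) = χ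
    rw [hBχ₀, hχ₀]
    module
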